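/- Let λ = 1 and 1 < p ≤ (π² + 12)/(π² − 4). Define φ(r) = −r·cot(r) + ((p−1)/(p+3))·((π/2)² − r²) for r ∈ (0, π/2). Then φ(r) < 0 for all r ∈ (0, π/2) (with φ(r) → ((p−1)/(p+3))(π/2)² − 1 ≤ 0 as r → 0 and φ(π/2) = 0). -/

import Mathlib

open Real

private lemma taylor_sin_lb {x : ℝ} (hx : 0 ≤ x) : x - x^3/6 ≤ Real.sin x := by
  have hd : ∀ y : ℝ, HasDerivAt (fun t : ℝ => Real.sin t - t + t^3/6)
      (Real.cos y - 1 + y^2/2) y := by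
    intro y
    have h1 : HasDerivAt (fun t : ℝ => t^3/6) (y^2/2) y := by
      have := (hasDerivAt_pow 3 y).div_const 6
      exact this.congr_deriv (by ring)
    exact ((Real.hasDerivAt_sin y).sub (hasDerivAt_id y)).add h1
  have hmono : MonotoneOn (fun t : ℝ => Real.sin t - t + t^3/6) (Set.Ici 0) := by
    apply monotoneOn_of_deriv_nonneg (convex_Ici 0)
    · exact (Continuous.continuousOn (by continuity))
    · intro y _
      exact (hd y).differentiableAt.differentiableWithinAt
    · intro y _
      rw [(hd y).deriv]
      nlinarith [Real.one_sub_sq_div_two_le_cos (x := y)]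
  have h0 := hmono (Set.self_mem_Ici) hx hx
  simp at h0
  linarith

private lemma taylor_cos_ub {x : ℝ} (hx : 0 ≤ x) : Real.cos x ≤ 1 - x^2/2 + x^4/24 := by
  have hd : ∀ y : ℝ, HasDerivAt (fun t : ℝ => 1 - t^2/2 + t^4/24 - Real.cos t)
      (Real.sin y - y + y^3/6) y := by
    intro y
    have h1 : HasDerivAt (fun t : ℝ => 1 - t^2/2 + t^4/24) (-y + y^3/6) y := by
      have h2 := (((hasDerivAt_pow 2 y).div_const 2).const_sub 1).add
        ((hasDerivAt_pow 4 y).div_const 24)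
      exact h2.congr_deriv (by ring)
    have := h1.sub (Real.hasDerivAt_cos y)
    exact this.congr_deriv (by ring)
  have hmono : MonotoneOn (fun t : ℝ => 1 - t^2/2 + t^4/24 - Real.cos t) (Set.Ici 0) := by
    apply monotoneOn_of_deriv_nonneg (convex_Ici 0)
    · exact (Continuous.continuousOn (by continuity))
    · intro y _
      exact (hd y).differentiableAt.differentiableWithinAt
    · intro y hy
      rw [interior_Ici] at hy
      rw [(hd y).deriv]
      have := taylor_sin_lb (le_of_lt hy)
      linarith
  have h0 := hmono (Set.self_mem_Ici) hx hx
  simp at h0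
  linarith

private lemma taylor_sin_ub {x : ℝ} (hx : 0 ≤ x) : Real.sin x ≤ x - x^3/6 + x^5/120 := by
  have hd : ∀ y : ℝ, HasDerivAt (fun t : ℝ => t - t^3/6 + t^5/120 - Real.sin t)
      (1 - y^2/2 + y^4/24 - Real.cos y) y := by
    intro y
    have h1 : HasDerivAt (fun t : ℝ => t - t^3/6 + t^5/120) (1 - y^2/2 + y^4/24) y := by
      have h2 := ((hasDerivAt_id y).sub ((hasDerivAt_pow 3 y).div_const 6)).add
        ((hasDerivAt_pow 5 y).div_const 120)
      exact h2.congr_deriv (by ring)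
    exact h1.sub (Real.hasDerivAt_sin y)
  have hmono : MonotoneOn (fun t : ℝ => t - t^3/6 + t^5/120 - Real.sin t) (Set.Ici 0) := by
    apply monotoneOn_of_deriv_nonneg (convex_Ici 0)
    · exact (Continuous.continuousOn (by continuity))
    · intro y _
      exact (hd y).differentiableAt.differentiableWithinAt
    · intro y hy
      rw [interior_Ici] at hy
      rw [(hd y).deriv]
      have := taylor_cos_ub (le_of_lt hy)
      linarith
  have h0 := hmono (Set.self_mem_Ici) hx hx
  simp at h0
  linarith

private lemma taylor_cos_lb {x : ℝ} (hx : 0 ≤ x) :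
    1 - x^2/2 + x^4/24 - x^6/720 ≤ Real.cos x := by
  have hd : ∀ y : ℝ, HasDerivAt (fun t : ℝ => Real.cos t - (1 - t^2/2 + t^4/24 - t^6/720))
      ((y - y^3/6 + y^5/120) - Real.sin y) y := by
    intro y
    have h1 : HasDerivAt (fun t : ℝ => 1 - t^2/2 + t^4/24 - t^6/720)
        (-y + y^3/6 - y^5/120) y := by
      have h2 := ((((hasDerivAt_pow 2 y).div_const 2).const_sub 1).add
        ((hasDerivAt_pow 4 y).div_const 24)).sub ((hasDerivAt_pow 6 y).div_const 720)
      exact h2.congr_deriv (by ring)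
    have := (Real.hasDerivAt_cos y).sub h1
    exact this.congr_deriv (by ring)
  have hmono : MonotoneOn (fun t : ℝ => Real.cos t - (1 - t^2/2 + t^4/24 - t^6/720))
      (Set.Ici 0) := by
    apply monotoneOn_of_deriv_nonneg (convex_Ici 0)
    · exact (Continuous.continuousOn (by continuity))
    · intro y _
      exact (hd y).differentiableAt.differentiableWithinAt
    · intro y hy
      rw [interior_Ici] at hy
      rw [(hd y).deriv]
      have := taylor_sin_ub (le_of_lt hy)
      linarith
  have h0 := hmono (Set.self_mem_Ici) hx hx
  simp at h0
  linarith

set_option maxHeartbeats 1600000 in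
/-- Near the endpoint: for `0 < w < 2/5`, `4w(π-w)cos w < π²(π/2-w) sin w`. -/
private lemma bs_near {w : ℝ} (hw0 : 0 < w) (hwu : w < 2/5) :
    4*w*(π - w) * Real.cos w < π^2 * (π/2 - w) * Real.sin w := by
  have hpl : 3.1415 < π := by linarith [Real.pi_gt_d6]
  have hpu : π < 3.1416 := by linarith [Real.pi_lt_d6]
  have hπ0 : (0:ℝ) < π := by linarith
  have hπ2l : 9.8690 < π^2 := by nlinarith [mul_pos (show (0:ℝ) < π - 3.1415 by linarith) (show (0:ℝ) < π + 3.1415 by linarith)]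
  have hπ2u : π^2 < 9.8697 := by nlinarith [mul_pos (show (0:ℝ) < 3.1416 - π by linarith) (show (0:ℝ) < 3.1416 + π by linarith)]
  have hπ3l : 31.003 < π^3 := by nlinarith [mul_lt_mul_of_pos_left hπ2l hπ0, mul_lt_mul_of_pos_right hpl (show (0:ℝ) < 9.8690 by norm_num)]
  have hπ3u : π^3 < 31.007 := by nlinarith [mul_lt_mul_of_pos_left hπ2u hπ0, mul_lt_mul_of_pos_right hpu (show (0:ℝ) < 9.8697 by norm_num)]
  have hw2 : w^2 < 4/25 := by nlinarith [mul_lt_mul_of_pos_left hwu hw0]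
  have hw3 : w^3 < 8/125 := by nlinarith [mul_lt_mul_of_pos_left hw2 hw0, mul_lt_mul_of_pos_right hwu (show (0:ℝ) < 4/25 by norm_num)]
  have hw4 : w^4 < 16/625 := by nlinarith [mul_lt_mul_of_pos_left hw3 hw0, mul_lt_mul_of_pos_right hwu (show (0:ℝ) < 8/125 by norm_num)]
  have hswl := taylor_sin_lb hw0.le
  have hcwu := taylor_cos_ub hw0.le
  have h1 : 4*w*(π - w) * Real.cos w ≤ 4*w*(π - w) * (1 - w^2/2 + w^4/24) := by
    apply mul_le_mul_of_nonneg_left hcwu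
    have h : (0:ℝ) < π - w := by linarith
    positivity
  have h2 : π^2 * (π/2 - w) * (w - w^3/6) ≤ π^2 * (π/2 - w) * Real.sin w := by
    apply mul_le_mul_of_nonneg_left hswl
    have h : (0:ℝ) < π/2 - w := by linarith
    positivity
  have hkey : π^2 * (π/2 - w) * (w - w^3/6) - 4*w*(π - w) * (1 - w^2/2 + w^4/24)
      = w * ((π^3/2 - 4*π) - (π^2 - 4)*w + (2*π - π^3/12)*w^2
          - (2 - π^2/6)*w^3 - (π/6)*w^4 + w^5/6) := by
    ring
  have hb : 0 < (π^3/2 - 4*π) - (π^2 - 4)*w + (2*π - π^3/12)*w^2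
      - (2 - π^2/6)*w^3 - (π/6)*w^4 + w^5/6 := by
    have t1 : (π^2 - 4)*w ≤ (π^2 - 4)*(2/5) :=
      mul_le_mul_of_nonneg_left (by linarith) (by linarith)
    have t2 : 0 ≤ (2*π - π^3/12)*w^2 := by
      apply mul_nonneg (by linarith) (sq_nonneg w)
    have t3 : (2 - π^2/6)*w^3 ≤ (2 - π^2/6)*(8/125) :=
      mul_le_mul_of_nonneg_left (by linarith) (by linarith)
    have t4 : (π/6)*w^4 ≤ (π/6)*(16/625) :=
      mul_le_mul_of_nonneg_left (by linarith) (by linarith)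
    have t5 : 0 ≤ w^5/6 := by positivity
    linarith
  linarith [mul_pos hw0 hb]

set_option maxHeartbeats 1600000 in
/-- Becker–Stark type inequality: `(π² - 4r²) sin r < π² r cos r` on `(0, π/2)`. -/
private lemma becker_stark {r : ℝ} (hr0 : 0 < r) (hrp : r < π/2) :
    (π^2 - 4*r^2) * Real.sin r < π^2 * r * Real.cos r := by
  have hpl : 3.1415 < π := by linarith [Real.pi_gt_d6]
  have hpu : π < 3.1416 := by linarith [Real.pi_lt_d6]
  rcases le_or_gt r (6/5) with hc | hc
  · -- small r: direct Taylor bounds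
    have hπ2u : π^2 < 9.8697 := by nlinarith [mul_pos (show (0:ℝ) < 3.1416 - π by linarith) (show (0:ℝ) < 3.1416 + π by linarith)]
    have hr2 : r^2 ≤ 36/25 := by nlinarith [mul_nonneg (show (0:ℝ) ≤ 6/5 - r by linarith) (show (0:ℝ) ≤ 6/5 + r by linarith)]
    have hsu := taylor_sin_ub hr0.le
    have hcl := taylor_cos_lb hr0.le
    have hπ4 : 0 ≤ π^2 - 4*r^2 := by nlinarith [mul_pos (show (0:ℝ) < π/2 - r by linarith) (show (0:ℝ) < π/2 + r by linarith)]
    have h1 : (π^2 - 4*r^2) * Real.sin r ≤ (π^2 - 4*r^2) * (r - r^3/6 + r^5/120) :=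
      mul_le_mul_of_nonneg_left hsu hπ4
    have h2 : π^2 * r * (1 - r^2/2 + r^4/24 - r^6/720) ≤ π^2 * r * Real.cos r :=
      mul_le_mul_of_nonneg_left hcl (by positivity)
    have h3 : (π^2 - 4*r^2) * (r - r^3/6 + r^5/120)
        < π^2 * r * (1 - r^2/2 + r^4/24 - r^6/720) := by
      have hkey : π^2 * r * (1 - r^2/2 + r^4/24 - r^6/720)
          - (π^2 - 4*r^2) * (r - r^3/6 + r^5/120)
          = r^3 * ((4 - π^2/3) - (2/3 - π^2/30)*r^2 + (1/30 - π^2/720)*r^4) := by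
        ring
      have hb : 0 < (4 - π^2/3) - (2/3 - π^2/30)*r^2 + (1/30 - π^2/720)*r^4 := by
        have t1 : (2/3 - π^2/30)*r^2 ≤ (2/3 - π^2/30)*(36/25) :=
          mul_le_mul_of_nonneg_left hr2 (by linarith)
        have t2 : 0 ≤ (1/30 - π^2/720)*r^4 := by
          apply mul_nonneg (by linarith) (by positivity)
        linarith
      linarith [mul_pos (pow_pos hr0 3) hb]
    linarith
  · -- r close to π/2
    have h := bs_near (w := π/2 - r) (by linarith) (by linarith)
    rw [Real.cos_pi_div_two_sub, Real.sin_pi_div_two_sub] at h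
    have e1 : (π^2 - 4*r^2) * Real.sin r = 4*(π/2 - r)*(π - (π/2 - r)) * Real.sin r := by
      ring
    have e2 : π^2 * r * Real.cos r = π^2 * (π/2 - (π/2 - r)) * Real.cos r := by
      ring
    rw [e1, e2]
    exact h

theorem stmt14 (p : ℝ) (hp1 : 1 < p) (hp2 : p ≤ (π^2 + 12)/(π^2 - 4)) :
    ∀ r ∈ Set.Ioo (0:ℝ) (π/2),
      -r * Real.cot r + ((p-1)/(p+3)) * ((π/2)^2 - r^2) < 0 := by
  intro r hr
  obtain ⟨hr0, hrp⟩ := hr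
  have hpl : 3.1415 < π := by linarith [Real.pi_gt_d6]
  have hpu : π < 3.1416 := by linarith [Real.pi_lt_d6]
  have hp3 : (0:ℝ) < p + 3 := by linarith
  have hπ2 : (0:ℝ) < π^2 := by positivity
  have hπ4 : (0:ℝ) < π^2 - 4 := by nlinarith [mul_pos (show (0:ℝ) < π - 2 by linarith) (show (0:ℝ) < π + 2 by linarith)]
  have hsin : 0 < Real.sin r := Real.sin_pos_of_pos_of_lt_pi hr0 (by linarith)
  have hple : p * (π^2 - 4) ≤ π^2 + 12 := by
    rw [le_div_iff₀ hπ4] at hp2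
    linarith
  have hc : (p-1)/(p+3) ≤ 4/π^2 := by
    rw [div_le_div_iff₀ hp3 hπ2]
    linarith
  have hX : (0:ℝ) < (π/2)^2 - r^2 := by nlinarith [mul_pos (show (0:ℝ) < π/2 - r by linarith) (show (0:ℝ) < π/2 + r by linarith)]
  have key := becker_stark hr0 hrp
  rw [Real.cot_eq_cos_div_sin]
  have h5 : ((p-1)/(p+3)) * ((π/2)^2 - r^2) ≤ (4/π^2) * ((π/2)^2 - r^2) :=
    mul_le_mul_of_nonneg_right hc hX.le
  have h6 : (4/π^2) * ((π/2)^2 - r^2) < r * (Real.cos r / Real.sin r) := by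
    rw [← mul_div_assoc, lt_div_iff₀ hsin]
    have e : (4/π^2) * ((π/2)^2 - r^2) * Real.sin r
        = ((π^2 - 4*r^2) * Real.sin r) / π^2 := by
      field_simp
      ring
    rw [e, div_lt_iff₀ hπ2]
    linarith
  linarith
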